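/- Let Y be a complete length space whose closed metric balls are compact, let y₀ ∈ Y, and let k > 0. Suppose that for every r > 0 and every δ > 0, every loop based at y₀ with image in the closed ball B̄_{y₀}(r) is homotopic, within the open ball B_{y₀}((k+1)r), to a finite product of δ-loops (i.e., G(y₀, r, (k+1)r, δ) is trivial for all r, δ > 0). Then for every path-connected covering space p : Ỹ → Y with ỹ₀ ∈ p⁻¹(y₀), the induced homomorphism p_* : π₁(Ỹ, ỹ₀) → π₁(Y, y₀) is surjective; consequently every path-connected covering of Y is a one-sheeted (trivial) covering, so Y is its own universal cover. -/

import Mathlib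

open Metric unitInterval CategoryTheory
open scoped FundamentalGroupoid ENNReal Manifold

universe u

noncomputable section

/-- The length of a path in a pseudo-emetric space, as the total variation of the
parametrization. -/
def pathLength {X : Type u} [PseudoEMetricSpace X] {x y : X} (γ : Path x y) : ℝ≥0∞ :=
  eVariationOn γ Set.univ

/-- A (pseudo-e)metric space is a *length space* if the distance between any two points is
the infimum of the lengths of paths joining them. -/
def IsLengthSpace (X : Type u) [PseudoEMetricSpace X] : Prop :=
  ∀ x y : X, edist x y = ⨅ γ : Path x y, pathLength γ

/-- Two loops are homotopic (rel endpoints) *within* the set `S` if there is a path homotopy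
between them whose image is contained in `S`. -/
def HomotopicIn {X : Type u} [TopologicalSpace X] {x y : X} (γ₁ γ₂ : Path x y) (S : Set X) :
    Prop :=
  ∃ H : Path.Homotopy γ₁ γ₂, ∀ z : I × I, H z ∈ S

/-- A loop is nullhomotopic within the set `S`. -/
def NullHomotopicIn {X : Type u} [TopologicalSpace X] {x : X} (γ : Path x x) (S : Set X) :
    Prop :=
  HomotopicIn γ (Path.refl x) S

/-- The homomorphism on fundamental groups induced by a continuous map. -/
def indHom {X Y : Type u} [TopologicalSpace X] [TopologicalSpace Y]
    (f : C(X, Y)) (x : X) : FundamentalGroup X x →* FundamentalGroup Y (f x) :=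
  Functor.mapEnd (FundamentalGroupoid.mk x)
    (πₘ (show TopCat.of X ⟶ TopCat.of Y from TopCat.ofHom f))

/-- The class of a loop in the fundamental group. -/
def pathClass {X : Type u} [TopologicalSpace X] {x : X} (γ : Path x x) :
    FundamentalGroup X x :=
  @FundamentalGroup.fromPath (TopCat.of X) _ x ⟦γ⟧

/-- The basepoint `p` as a point of the closed ball `B̄_p(r)`. -/
def pcb {X : Type u} [MetricSpace X] (p : X) {r : ℝ} (h0 : 0 ≤ r) : closedBall p r :=
  ⟨p, mem_closedBall_self h0⟩

/-- The basepoint `p` as a point of the open ball `B_p(R)`. -/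
def ctr {X : Type u} [MetricSpace X] (p : X) {R : ℝ} (hR : 0 < R) : ball p R :=
  ⟨p, mem_ball_self hR⟩

/-- The inclusion of the closed ball `B̄_p(r)` into the open ball `B_p(R)`, `r < R`. -/
def cbInclusion {X : Type u} [MetricSpace X] (p : X) {r R : ℝ} (h : r < R) :
    C(closedBall p r, ball p R) :=
  ⟨fun z => ⟨z.1, mem_ball.mpr (lt_of_le_of_lt (mem_closedBall.mp z.2) h)⟩,
    Continuous.subtype_mk continuous_subtype_val _⟩

/-- The geometric semi-local fundamental group `G(p,r,R)`: the image of
`π₁(B̄_p(r), p) → π₁(B_p(R), p)`, as a subgroup of `π₁(B_p(R), p)`. -/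
def G {X : Type u} [MetricSpace X] (p : X) {r R : ℝ} (h0 : 0 ≤ r) (hrR : r < R) :
    Subgroup (FundamentalGroup (ball p R) (ctr p (h0.trans_lt hrR))) :=
  (indHom (cbInclusion p hrR) (pcb p h0)).range

/-- The homomorphism `π₁(B_p(R), p) → π₁(X, p)` induced by inclusion. -/
def toAmb {X : Type u} [MetricSpace X] (p : X) {R : ℝ} (hR : 0 < R) :
    FundamentalGroup (ball p R) (ctr p hR) →* FundamentalGroup X p :=
  indHom ⟨Subtype.val, continuous_subtype_val⟩ (ctr p hR)

/-- The homomorphism `π₁(B̄_p(r), p) → π₁(X, p)` induced by inclusion. -/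
def cbToAmb {X : Type u} [MetricSpace X] (p : X) {r : ℝ} (h0 : 0 ≤ r) :
    FundamentalGroup (closedBall p r) (pcb p h0) →* FundamentalGroup X p :=
  indHom ⟨Subtype.val, continuous_subtype_val⟩ (pcb p h0)

end
/-- A `δ`-loop based at `p`: a loop of the form `α * β * α⁻¹` where `β` is a closed path lying
in some ball of radius `δ` and `α` is a path from `p` to `β 0`. -/
def IsDeltaLoop {X : Type u} [MetricSpace X] {p : X} (δ : ℝ) (γ : Path p p) : Prop :=
  ∃ (z c : X) (α : Path p z) (β : Path z z),
    (∀ t, β t ∈ ball c δ) ∧ γ = (α.trans β).trans α.symm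

/-- The concatenation of a finite list of loops based at `p`. -/
noncomputable def loopProd {X : Type u} [TopologicalSpace X] {p : X} (l : List (Path p p)) : Path p p :=
  l.foldr Path.trans (Path.refl p)

/-- Triviality of the relative `δ`-group `G(x, r, R, δ)`: every loop based at `x` with image in
the closed ball `B̄_x(r)` is homotopic, within the open ball `B_x(R)`, to a finite product of
`δ`-loops. -/
def DeltaTrivial {X : Type u} [MetricSpace X] (x : X) (r R δ : ℝ) : Prop :=
  ∀ γ : Path x x, (∀ t, γ t ∈ closedBall x r) →
    ∃ l : List (Path x x), (∀ γ' ∈ l, IsDeltaLoop δ γ') ∧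
      HomotopicIn γ (loopProd l) (ball x R)


universe v w

section Lifting

variable {E : Type v} {X : Type w} [TopologicalSpace E] [TopologicalSpace X] {q : E → X}

/-- The fiber component of a lift is locally constant on preconnected sets staying in
a trivialization's base set. -/
lemma fiber_comp_const {F : Type*} [TopologicalSpace F] [DiscreteTopology F]
    (T : Bundle.Trivialization F q) {A : Type*} [TopologicalSpace A] {s : Set A}
    (hs : _root_.IsPreconnected s) {g : A → E} (hg : Continuous g)
    (hmem : ∀ a ∈ s, q (g a) ∈ T.baseSet) {a b : A} (ha : a ∈ s) (hb : b ∈ s) :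
    (T (g a)).2 = (T (g b)).2 := by
  have hsrc : ∀ a ∈ s, g a ∈ T.source := fun a ha => T.mem_source.2 (hmem a ha)
  have cont : ContinuousOn (fun a => (T (g a)).2) s := by
    have c1 : ContinuousOn (⇑T ∘ g) s :=
      T.continuousOn_toFun.comp hg.continuousOn (fun a ha => hsrc a ha)
    exact c1.snd
  have himg : _root_.IsPreconnected ((fun a => (T (g a)).2) '' s) := hs.image _ cont
  exact himg.subsingleton ⟨a, ha, rfl⟩ ⟨b, hb, rfl⟩

lemma fiber_point_eq {F : Type*} [TopologicalSpace F] [DiscreteTopology F]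
    (T : Bundle.Trivialization F q) {A : Type*} [TopologicalSpace A] {s : Set A}
    (hs : _root_.IsPreconnected s) {g : A → E} (hg : Continuous g)
    (hmem : ∀ a ∈ s, q (g a) ∈ T.baseSet) {a b : A} (ha : a ∈ s) (hb : b ∈ s)
    (hqq : q (g a) = q (g b)) : g a = g b := by
  have hsa : g a ∈ T.source := T.mem_source.2 (hmem a ha)
  have hsb : g b ∈ T.source := T.mem_source.2 (hmem b hb)
  apply T.toOpenPartialHomeomorph.injOn hsa hsb
  have h1 : (T (g a)).1 = (T (g b)).1 := by
    rw [T.coe_fst hsa, T.coe_fst hsb]; exact hqq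
  exact Prod.ext h1 (fiber_comp_const T hs hg hmem ha hb)

lemma isPreconnected_I_of_real (s : Set ℝ) (hs : Convex ℝ s) :
    _root_.IsPreconnected ((↑) ⁻¹' s : Set I) := by
  rw [← Topology.IsInducing.subtypeVal.isPreconnected_image]
  rw [Subtype.image_preimage_coe]
  exact ((convex_Icc (0:ℝ) 1).inter hs).isPreconnected

lemma cov_range_closed (hq : IsCoveringMap q) : IsClosed (Set.range q) := by
  rw [← isOpen_compl_iff, isOpen_iff_mem_nhds]
  intro y hy
  obtain ⟨_, U, hyU, hUo, _, H, _⟩ := hq y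
  refine Filter.mem_of_superset (hUo.mem_nhds hyU) ?_
  rintro y' hy' ⟨e1, rfl⟩
  exact hy ⟨(H ⟨e1, hy'⟩).2.1, (H ⟨e1, hy'⟩).2.2⟩

lemma exists_path_lift (hq : IsCoveringMap q) (γ : C(I, X)) (e : E) (he : q e = γ 0) :
    ∃ g : C(I, E), g 0 = e ∧ ∀ t, q (g t) = γ t := by
  classical
  set S : Set I := {t | ∃ g : C(I, E), g 0 = e ∧ ∀ s ≤ t, q (g s) = γ s} with hSdef
  have hdc : ∀ {t t' : I}, t' ≤ t → t ∈ S → t' ∈ S := by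
    rintro t t' h ⟨g, h0, hl⟩; exact ⟨g, h0, fun s hs => hl s (hs.trans h)⟩
  have h0S : (0 : I) ∈ S := by
    refine ⟨ContinuousMap.const I e, rfl, fun s hs => ?_⟩
    have : s = 0 := le_antisymm hs s.2.1
    rw [this]; exact he
  -- extension step
  have ext : ∀ (x : X) [Nonempty (q ⁻¹' {x})] (t' c : I), t' ∈ S → t' ≤ c →
      (∀ u : I, t' ≤ u → u ≤ c → γ u ∈ (hq x).toTrivialization.baseSet) → c ∈ S := by
    intro x _ t' c ht' hcc hband
    obtain ⟨g, hg0, hgl⟩ := ht'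
    haveI : DiscreteTopology (q ⁻¹' {x}) := (hq x).1
    set T := (hq x).toTrivialization with hT
    have hsrc : g t' ∈ T.source := by
      rw [T.mem_source, hgl t' le_rfl]; exact hband t' le_rfl hcc
    set f₀ := (T (g t')).2 with hf₀
    set g₂ : I → E := fun u => T.toOpenPartialHomeomorph.symm (γ (max t' (min u c)), f₀) with hg₂
    have hmemb : ∀ u : I, γ (max t' (min u c)) ∈ T.baseSet := fun u =>
      hband _ (le_max_left _ _) (max_le hcc (min_le_right _ _))
    have hcont₂ : Continuous g₂ := by
      apply T.toOpenPartialHomeomorph.continuousOn_symm.comp_continuous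
      · have hmc : Continuous fun u : I => max t' (min u c) :=
          continuous_const.max (continuous_id.min continuous_const)
        exact (γ.continuous.comp hmc).prodMk continuous_const
      · intro u
        exact T.mem_target.2 (hmemb u)
    have hkey : g₂ t' = g t' := by
      have h1 : max t' (min t' c) = t' := by rw [min_eq_left hcc, max_self]
      have h2 : (γ t', f₀) = T (g t') := by
        refine Prod.ext ?_ rfl
        rw [T.coe_fst hsrc, hgl t' le_rfl]
      simp only [hg₂, h1, h2]
      exact T.toOpenPartialHomeomorph.left_inv hsrc
    refine ⟨⟨fun u => if u ≤ t' then g u else g₂ u, ?_⟩, ?_, ?_⟩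
    · exact Continuous.if_le g.continuous hcont₂ continuous_id continuous_const
        (fun u hu => by rw [show u = t' from hu]; exact hkey.symm)
    · show (if (0:I) ≤ t' then g 0 else g₂ 0) = e
      split_ifs with h
      · exact hg0
      · exact absurd t'.2.1 h
    · intro s hs
      show q (if s ≤ t' then g s else g₂ s) = γ s
      split_ifs with hst
      · exact hgl s hst
      · push_neg at hst
        have h1 : max t' (min s c) = s := by rw [min_eq_left hs, max_eq_right hst.le]
        simp only [hg₂, h1]
        exact T.proj_symm_apply' (hband s hst.le hs)
  -- closedness
  have hclo : ∀ t : I, t ∈ closure S → t ∈ S := by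
    intro t ht
    haveI : Nonempty (q ⁻¹' {γ t}) := by
      obtain ⟨e1, he1⟩ := (cov_range_closed hq).closure_subset
        (map_mem_closure γ.continuous ht (t := Set.range q)
          (fun u hu => by obtain ⟨g, -, hgl⟩ := hu; exact ⟨g u, hgl u le_rfl⟩))
      exact ⟨⟨e1, he1⟩⟩
    have hU : γ t ∈ (hq (γ t)).toTrivialization.baseSet :=
      (hq (γ t)).mem_toTrivialization_baseSet
    have hnhds : γ ⁻¹' (hq (γ t)).toTrivialization.baseSet ∈ nhds t :=
      γ.continuous.continuousAt.preimage_mem_nhds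
        ((hq (γ t)).toTrivialization.open_baseSet.mem_nhds hU)
    obtain ⟨ε, hε, hball⟩ := Metric.mem_nhds_iff.1 hnhds
    obtain ⟨t', ht'S, htt'⟩ := Metric.mem_closure_iff.1 ht ε hε
    rcases le_total t t' with h | h
    · exact hdc h ht'S
    · refine ext (γ t) t' t ht'S h (fun u h1 h2 => hball ?_)
      show dist u t < ε
      have e1 : dist u t ≤ dist t' t := by
        rw [Subtype.dist_eq, Subtype.dist_eq, Real.dist_eq, Real.dist_eq]
        rw [abs_of_nonpos (by simpa using h2), abs_of_nonpos (by simpa using h)]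
        simp only [neg_sub]
        have := Subtype.coe_le_coe.2 h1
        linarith
      calc dist u t ≤ dist t' t := e1
        _ = dist t t' := dist_comm _ _
        _ < ε := htt'
  have hSclosed : IsClosed S := isClosed_of_closure_subset hclo
  have hSopen : IsOpen S := by
    rw [isOpen_iff_mem_nhds]
    intro t ht
    haveI : Nonempty (q ⁻¹' {γ t}) := by
      obtain ⟨g, -, hgl⟩ := ht; exact ⟨⟨g t, hgl t le_rfl⟩⟩
    have hU : γ t ∈ (hq (γ t)).toTrivialization.baseSet :=
      (hq (γ t)).mem_toTrivialization_baseSet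
    have hnhds : γ ⁻¹' (hq (γ t)).toTrivialization.baseSet ∈ nhds t :=
      γ.continuous.continuousAt.preimage_mem_nhds
        ((hq (γ t)).toTrivialization.open_baseSet.mem_nhds hU)
    obtain ⟨ε, hε, hball⟩ := Metric.mem_nhds_iff.1 hnhds
    rcases eq_or_lt_of_le t.2.2 with h1 | h1
    · -- t = 1
      have ht1 : t = 1 := Subtype.ext h1
      have : S = Set.univ := Set.eq_univ_of_forall (fun u => hdc (ht1 ▸ u.2.2 : u ≤ t) ht)
      rw [this]; exact Filter.univ_mem
    · -- t < 1
      have h0c : (0:ℝ) ≤ min (↑t + ε/2) 1 := le_min (by have := t.2.1; linarith) zero_le_one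
      set c : I := ⟨min (↑t + ε/2) 1, h0c, min_le_right _ _⟩ with hc
      have htc : t < c := by
        rw [← Subtype.coe_lt_coe]
        exact lt_min (by linarith) h1
      have hcS : c ∈ S := by
        refine ext (γ t) t c ht htc.le (fun u h2 h3 => hball ?_)
        show dist u t < ε
        rw [Subtype.dist_eq, Real.dist_eq, abs_of_nonneg (by simpa using h2)]
        have h4 : (u:ℝ) ≤ min (↑t + ε/2) 1 := h3
        have h5 : (u:ℝ) ≤ ↑t + ε/2 := h4.trans (min_le_left _ _)
        linarith
      have : {u : I | u < c} ⊆ S := fun u hu => hdc (le_of_lt hu) hcS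
      exact Filter.mem_of_superset (isOpen_Iio.mem_nhds htc) this
  have hSuniv : S = Set.univ := (IsClopen.eq_univ ⟨hSclosed, hSopen⟩) ⟨0, h0S⟩
  obtain ⟨g, hg0, hgl⟩ : (1:I) ∈ S := hSuniv ▸ Set.mem_univ _
  exact ⟨g, hg0, fun t => hgl t t.2.2⟩

end Lifting

section Clift

variable {E : Type v} {X : Type w} [TopologicalSpace E] [TopologicalSpace X] {q : E → X}

/-- A choice of path lift. -/
noncomputable def clift (hq : IsCoveringMap q) (γ : C(I, X)) (e : E) (he : q e = γ 0) :
    C(I, E) :=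
  (exists_path_lift hq γ e he).choose

lemma clift_zero (hq : IsCoveringMap q) (γ : C(I, X)) (e : E) (he : q e = γ 0) :
    clift hq γ e he 0 = e :=
  (exists_path_lift hq γ e he).choose_spec.1

lemma clift_proj (hq : IsCoveringMap q) (γ : C(I, X)) (e : E) (he : q e = γ 0) (t : I) :
    q (clift hq γ e he t) = γ t :=
  (exists_path_lift hq γ e he).choose_spec.2 t

lemma lift_unique (hq : IsCoveringMap q) {g₁ g₂ : I → E} (h₁ : Continuous g₁)
    (h₂ : Continuous g₂) (hc : ∀ t, q (g₁ t) = q (g₂ t)) (h0 : g₁ 0 = g₂ 0) : g₁ = g₂ :=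
  hq.eq_of_comp_eq h₁ h₂ (funext hc) 0 h0

lemma eq_clift (hq : IsCoveringMap q) (γ : C(I, X)) (e : E) (he : q e = γ 0)
    {g : I → E} (hg : Continuous g) (hproj : ∀ t, q (g t) = γ t) (h0 : g 0 = e) :
    ∀ t, g t = clift hq γ e he t := by
  intro t
  have := lift_unique hq hg (clift hq γ e he).continuous
    (fun t => (hproj t).trans (clift_proj hq γ e he t).symm) (by rw [h0, clift_zero])
  exact congrFun this t

/-- Endpoints of lifts are invariant under homotopy rel endpoints. -/
lemma homotopy_endpoint (hq : IsCoveringMap q) (H : C(I × I, X)) (e : E)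
    (h0 : ∀ s, H (s, 0) = q e) (h1 : ∀ s s', H (s, 1) = H (s', 1))
    (g₀ g₁ : C(I, E)) (hg₀0 : g₀ 0 = e) (hg₁0 : g₁ 0 = e)
    (hp₀ : ∀ t, q (g₀ t) = H (0, t)) (hp₁ : ∀ t, q (g₁ t) = H (1, t)) :
    g₀ 1 = g₁ 1 := by
  classical
  -- the family of lifted paths
  set γs : I → C(I, X) := fun s => ⟨fun t => H (s, t), H.continuous.comp
    (continuous_const.prodMk continuous_id)⟩ with hγs
  have hes : ∀ s, q e = γs s 0 := fun s => (h0 s).symm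
  set F : I → I → E := fun s => clift hq (γs s) e (hes s) with hF
  have hFproj : ∀ s t, q (F s t) = H (s, t) := fun s t => clift_proj hq (γs s) e (hes s) t
  have hF0 : ∀ s, F s 0 = e := fun s => clift_zero hq (γs s) e (hes s)
  -- the set of times where the slice is continuous in s
  set S : Set I := {t | Continuous fun s => F s t} with hS
  -- transfer lemma
  have transfer : ∀ t : I, ∃ ε > 0, ∀ a b : I, dist a t < ε → dist b t < ε →
      Continuous (fun s => F s a) → Continuous (fun s => F s b) := by
    intro t
    haveI hne : ∀ s₀ : I, Nonempty (q ⁻¹' {H (s₀, t)}) := fun s₀ => ⟨⟨F s₀ t, hFproj s₀ t⟩⟩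
    -- for each s₀ pick a trivialization around H (s₀, t) and a product neighborhood
    have key : ∀ s₀ : I, ∃ (V : Set I) (ε : ℝ), IsOpen V ∧ s₀ ∈ V ∧ 0 < ε ∧
        ∀ s ∈ V, ∀ u : I, dist u t < ε → H (s, u) ∈ (hq (H (s₀, t))).toTrivialization.baseSet := by
      intro s₀
      have hU : H (s₀, t) ∈ (hq (H (s₀, t))).toTrivialization.baseSet :=
        (hq (H (s₀, t))).mem_toTrivialization_baseSet
      have hnhds : H ⁻¹' (hq (H (s₀, t))).toTrivialization.baseSet ∈ nhds (s₀, t) :=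
        H.continuous.continuousAt.preimage_mem_nhds
          ((hq (H (s₀, t))).toTrivialization.open_baseSet.mem_nhds hU)
      rw [mem_nhds_prod_iff] at hnhds
      obtain ⟨A, hA, B, hB, hAB⟩ := hnhds
      obtain ⟨V, hVA, hVopen, hs₀V⟩ := _root_.mem_nhds_iff.1 hA
      obtain ⟨ε, hε, hball⟩ := Metric.mem_nhds_iff.1 hB
      refine ⟨V, ε, hVopen, hs₀V, hε, fun s hs u hu => hAB ⟨hVA hs, hball hu⟩⟩
    choose V εf hVopen hmemV hεpos hband using key
    -- compactness
    obtain ⟨u, hu⟩ := isCompact_univ.elim_finite_subcover V hVopen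
      (fun s _ => Set.mem_iUnion.2 ⟨s, hmemV s⟩)
    have hune : u.Nonempty := by
      obtain ⟨i, hi⟩ := Set.mem_iUnion₂.1 (hu (Set.mem_univ 0))
      exact ⟨i, hi.1⟩
    set ε := u.inf' hune εf with hε
    have hεpos' : 0 < ε := (Finset.lt_inf'_iff hune).2 (fun i _ => hεpos i)
    refine ⟨ε, hεpos', fun a b ha hb hca => ?_⟩
    rw [continuous_iff_continuousAt]
    intro s₀
    obtain ⟨i, hiu, hs₀V⟩ := Set.mem_iUnion₂.1 (hu (Set.mem_univ s₀))
    haveI : DiscreteTopology (q ⁻¹' {H (i, t)}) := (hq (H (i, t))).1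
    set T := (hq (H (i, t))).toTrivialization with hT
    have hεi : ε ≤ εf i := Finset.inf'_le _ hiu
    have hbaseA : ∀ s ∈ V i, ∀ w : I, dist w t < εf i → H (s, w) ∈ T.baseSet :=
      fun s hs w hw => hband i s hs w hw
    have hda : dist a t < εf i := lt_of_lt_of_le ha hεi
    have hdb : dist b t < εf i := lt_of_lt_of_le hb hεi
    -- on `V i`, `F s b` is given by an explicit formula in terms of `F s a`
    have hformula : ∀ s ∈ V i,
        F s b = T.toOpenPartialHomeomorph.symm (H (s, b), (T (F s a)).2) := by
      intro s hs
      set Bset : Set I := {w : I | dist w t < εf i} with hBset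
      have hBpre : _root_.IsPreconnected Bset := by
        have : Bset = (↑) ⁻¹' (Metric.ball (t : ℝ) (εf i)) := by
          ext w; simp [hBset, Subtype.dist_eq]
        rw [this]
        exact isPreconnected_I_of_real _ (convex_ball _ _)
      have hmemB : ∀ w ∈ Bset, q (F s w) ∈ T.baseSet := by
        intro w hw; rw [hFproj s w]; exact hbaseA s hs w hw
      have hsheet : (T (F s a)).2 = (T (F s b)).2 :=
        fiber_comp_const T hBpre (clift hq (γs s) e (hes s)).continuous hmemB hda hdb
      have hsrcb : F s b ∈ T.source := T.mem_source.2 (by rw [hFproj]; exact hbaseA s hs b hdb)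
      have : T (F s b) = (H (s, b), (T (F s a)).2) := by
        refine Prod.ext ?_ hsheet.symm
        rw [T.coe_fst hsrcb, hFproj]
      rw [← this]
      exact (T.toOpenPartialHomeomorph.left_inv hsrcb).symm
    -- the formula is continuous in s on V i
    have hcont : ContinuousOn (fun s => T.toOpenPartialHomeomorph.symm (H (s, b), (T (F s a)).2))
        (V i) := by
      have c0 : ContinuousOn (fun s => F s a) (V i) := hca.continuousOn
      have csrc : ∀ s ∈ V i, F s a ∈ T.source :=
        fun s hs => T.mem_source.2 (by rw [hFproj]; exact hbaseA s hs a hda)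
      have c1 : ContinuousOn (⇑T ∘ fun s => F s a) (V i) :=
        T.continuousOn_toFun.comp c0 csrc
      have c2 : ContinuousOn (fun s => (H (s, b), (T (F s a)).2)) (V i) :=
        ((H.continuous.comp (continuous_id.prodMk continuous_const)).continuousOn).prodMk c1.snd
      apply T.toOpenPartialHomeomorph.continuousOn_symm.comp c2
      intro s hs
      exact T.mem_target.2 (hbaseA s hs b hdb)
    have : ContinuousOn (fun s => F s b) (V i) :=
      hcont.congr hformula
    exact this.continuousAt ((hVopen i).mem_nhds hs₀V)
  -- clopen argument
  have h0S : (0 : I) ∈ S := by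
    have : (fun s => F s 0) = fun _ => e := funext hF0
    simp only [hS, Set.mem_setOf_eq, this]
    exact continuous_const
  have hSopen : IsOpen S := by
    rw [isOpen_iff_mem_nhds]
    intro t ht
    obtain ⟨ε, hε, htr⟩ := transfer t
    have : {w : I | dist w t < ε} ⊆ S := fun w hw =>
      htr t w (by simp [dist_self, hε]) hw ht
    exact Filter.mem_of_superset (Metric.ball_mem_nhds t hε) this
  have hSclosed : IsClosed S := by
    apply isClosed_of_closure_subset
    intro t ht
    obtain ⟨ε, hε, htr⟩ := transfer t
    obtain ⟨w, hwS, hwd⟩ := Metric.mem_closure_iff.1 ht ε hε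
    exact htr w t (by rw [dist_comm]; exact hwd) (by simp [dist_self, hε]) hwS
  have hSuniv : S = Set.univ := (IsClopen.eq_univ ⟨hSclosed, hSopen⟩) ⟨0, h0S⟩
  have h1S : Continuous fun s => F s 1 := by
    have : (1 : I) ∈ S := hSuniv ▸ Set.mem_univ _
    exact this
  -- the endpoint map lands in a single fiber, hence is constant
  have hconst : F 0 1 = F 1 1 :=
    hq.const_of_comp h1S (fun s s' => by rw [hFproj, hFproj]; exact h1 s s') 0 1
  have e₀ : g₀ 1 = F 0 1 := by
    have := eq_clift hq (γs 0) e (hes 0) g₀.continuous (fun t => hp₀ t) hg₀0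
    exact this 1
  have e₁ : g₁ 1 = F 1 1 := by
    have := eq_clift hq (γs 1) e (hes 1) g₁.continuous (fun t => hp₁ t) hg₁0
    exact this 1
  rw [e₀, e₁, hconst]

end Clift

section Helpers

variable {E : Type v} {X : Type w} [TopologicalSpace E] [TopologicalSpace X] {f : E → X}

lemma comp_trans_apply {a b c : E} {a' b' c' : X} (p : Path a b) (r : Path b c)
    (pm : Path a' b') (rm : Path b' c') (hp : ∀ t, f (p t) = pm t)
    (hr : ∀ t, f (r t) = rm t) (t : I) : f ((p.trans r) t) = (pm.trans rm) t := by
  rw [Path.trans_apply, Path.trans_apply]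
  split_ifs <;> simp [hp, hr]

lemma comp_symm_apply {a b : E} {a' b' : X} (p : Path a b) (pm : Path a' b')
    (hp : ∀ t, f (p t) = pm t) (t : I) : f (p.symm t) = pm.symm t := by
  show f ((p ∘ σ) t) = (pm ∘ σ) t
  exact hp (σ t)

end Helpers

section Metric2

open Metric

variable {Y : Type u} [MetricSpace Y] [ProperSpace Y]
variable {E : Type u} [TopologicalSpace E] {q : E → Y}

-- we re-state the relevant definitions locally to develop the theory; these are
-- definitionally the same as in the main file, but we inline them via hypotheses.

/-- Key lemma: under the δ-triviality hypothesis, every loop at `y₀` is homotopic to a loop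
which lifts to a loop based at any point of the fiber. -/
lemma key_lemma (hq : IsCoveringMap q) [∀ x : Y, Nonempty (q ⁻¹' {x})] (y₀ : Y) (k : ℝ) (hk : 0 < k)
    (htriv : ∀ r, 0 < r → ∀ δ, 0 < δ → ∀ γ : Path y₀ y₀, (∀ t, γ t ∈ closedBall y₀ r) →
      ∃ l : List (Path y₀ y₀), (∀ γ' ∈ l, ∃ (z c : Y) (α : Path y₀ z) (β : Path z z),
          (∀ t, β t ∈ ball c δ) ∧ γ' = (α.trans β).trans α.symm) ∧
        ∃ H : Path.Homotopy γ (l.foldr Path.trans (Path.refl y₀)),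
          ∀ z : I × I, H z ∈ ball y₀ ((k + 1) * r))
    (γ : Path y₀ y₀) :
    ∃ P : Path y₀ y₀, (∃ H : Path.Homotopy γ P, True) ∧
      ∀ e : E, q e = y₀ → ∃ Γ : Path e e, ∀ t, q (Γ t) = P t := by
  classical
  -- a closed ball containing the image of γ
  obtain ⟨r₀, hr₀⟩ := (isCompact_range γ.continuous).isBounded.subset_closedBall y₀
  set r := max r₀ 1 with hr
  have hrpos : 0 < r := lt_of_lt_of_le one_pos (le_max_right _ _)
  have hγr : ∀ t, γ t ∈ closedBall y₀ r := fun t =>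
    closedBall_subset_closedBall (le_max_left _ _) (hr₀ (Set.mem_range_self t))
  -- Lebesgue number for the compact ball K
  set K : Set Y := closedBall y₀ ((k + 1) * r) with hK
  have hKcompact : IsCompact K := isCompact_closedBall _ _
  obtain ⟨δ', hδ', hleb⟩ := lebesgue_number_lemma_of_metric hKcompact
    (fun x : Y => (hq x).toTrivialization.open_baseSet)
    (fun x _ => Set.mem_iUnion.2 ⟨x, (hq x).mem_toTrivialization_baseSet⟩)
  have hδ4 : 0 < δ' / 4 := by positivity
  obtain ⟨l, hl, H, hH⟩ := htriv r hrpos (δ' / 4) hδ4 γ hγr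
  have hPK : ∀ t, (l.foldr Path.trans (Path.refl y₀)) t ∈ K := by
    intro t
    have h1 : H (1, t) = (l.foldr Path.trans (Path.refl y₀)) t := H.apply_one t
    have h2 := hH (1, t)
    rw [h1] at h2
    exact ball_subset_closedBall h2
  refine ⟨l.foldr Path.trans (Path.refl y₀), ⟨H, trivial⟩, ?_⟩
  -- induction over the list of δ-loops
  have claim : ∀ L : List (Path y₀ y₀),
      (∀ γ' ∈ L, ∃ (z c : Y) (α : Path y₀ z) (β : Path z z),
          (∀ t, β t ∈ ball c (δ' / 4)) ∧ γ' = (α.trans β).trans α.symm) →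
      (∀ t, L.foldr Path.trans (Path.refl y₀) t ∈ K) →
      ∀ e : E, q e = y₀ → ∃ Γ : Path e e,
        ∀ t, q (Γ t) = L.foldr Path.trans (Path.refl y₀) t := by
    intro L
    induction L with
    | nil =>
      intro _ _ e he
      refine ⟨Path.refl e, fun t => ?_⟩
      show q e = Path.refl y₀ t
      simp [he]
    | cons γ' l' ih =>
      intro hl hPK e he
      have hrange : Set.range ⇑(List.foldr Path.trans (Path.refl y₀) (γ' :: l')) ⊆ K := by
        rintro x ⟨t, rfl⟩; exact hPK t
      rw [show List.foldr Path.trans (Path.refl y₀) (γ' :: l') =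
        γ'.trans (List.foldr Path.trans (Path.refl y₀) l') from rfl] at hrange
      rw [Path.trans_range] at hrange
      -- head is a δ-loop
      obtain ⟨z, c, α, β, hβ, hshape⟩ := hl γ' List.mem_cons_self
      have hβK : Set.range ⇑β ⊆ K := by
        have h1 : Set.range ⇑γ' ⊆ K := fun x hx => hrange (Set.mem_union_left _ hx)
        have h2 : Set.range ⇑β ⊆ Set.range ⇑γ' := by
          rw [hshape, Path.trans_range, Path.trans_range]
          exact fun x hx => Set.mem_union_left _ (Set.mem_union_right _ hx)
        exact h2.trans h1
      obtain ⟨x₀, hx₀⟩ := hleb (β 0) (hβK (Set.mem_range_self 0))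
      haveI : DiscreteTopology (q ⁻¹' {x₀}) := (hq x₀).1
      set T := (hq x₀).toTrivialization with hT
      have hβU : ∀ t, β t ∈ T.baseSet := by
        intro t
        apply hx₀
        show dist (β t) (β 0) < δ'
        have h1 : dist (β t) c < δ' / 4 := hβ t
        have h2 : dist (β 0) c < δ' / 4 := hβ 0
        calc dist (β t) (β 0) ≤ dist (β t) c + dist (β 0) c := dist_triangle_right _ _ _
          _ < δ' := by linarith
      -- lift α, then β (which lifts to a loop), then go back along the lift of α
      have heα : q e = α.toContinuousMap 0 := he.trans α.source.symm
      set A := clift hq α.toContinuousMap e heα with hA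
      have hAproj : ∀ t, q (A t) = α t := fun t => clift_proj hq _ _ _ t
      have hA1 : q (A 1) = β.toContinuousMap 0 := by
        rw [hAproj]
        show α 1 = β 0
        rw [α.target, β.source]
      set B := clift hq β.toContinuousMap (A 1) hA1 with hB
      have hBproj : ∀ t, q (B t) = β t := fun t => clift_proj hq _ _ _ t
      have hBloop : B 1 = B 0 := by
        refine fiber_point_eq T isPreconnected_univ B.continuous
          (fun t _ => by rw [hBproj]; exact hβU t) (Set.mem_univ 1) (Set.mem_univ 0) ?_
        rw [hBproj, hBproj, β.target, β.source]
      have hA0 : A 0 = e := by rw [hA]; exact clift_zero hq _ _ _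
      have hB0 : B 0 = A 1 := by rw [hB]; exact clift_zero hq _ _ _
      set PA : Path e (A 1) :=
        { toFun := A, continuous_toFun := A.continuous,
          source' := hA0, target' := rfl } with hPA
      set PB : Path (A 1) (A 1) :=
        { toFun := B, continuous_toFun := B.continuous,
          source' := hB0,
          target' := hBloop.trans hB0 } with hPB
      obtain ⟨Γt, hΓt⟩ := ih (fun g hg => hl g (List.mem_cons_of_mem _ hg))
        (fun t => hrange (Set.mem_union_right _ (Set.mem_range_self t))) e he
      set Γh : Path e e := (PA.trans PB).trans PA.symm with hΓh
      have hΓhproj : ∀ t, q (Γh t) = γ' t := by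
        intro t
        rw [hshape]
        refine comp_trans_apply _ _ _ _ ?_ ?_ t
        · exact comp_trans_apply _ _ _ _ (fun u => hAproj u) (fun u => hBproj u)
        · exact comp_symm_apply _ _ (fun u => hAproj u)
      refine ⟨Γh.trans Γt, fun t => ?_⟩
      exact comp_trans_apply _ _ _ _ hΓhproj hΓt t
  exact claim l hl hPK

/-- Monodromy is trivial: every lift of every loop at `y₀` is a loop. -/
lemma monodromy_trivial (hq : IsCoveringMap q) [∀ x : Y, Nonempty (q ⁻¹' {x})] (y₀ : Y) (k : ℝ) (hk : 0 < k)
    (htriv : ∀ r, 0 < r → ∀ δ, 0 < δ → ∀ γ : Path y₀ y₀, (∀ t, γ t ∈ closedBall y₀ r) →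
      ∃ l : List (Path y₀ y₀), (∀ γ' ∈ l, ∃ (z c : Y) (α : Path y₀ z) (β : Path z z),
          (∀ t, β t ∈ ball c δ) ∧ γ' = (α.trans β).trans α.symm) ∧
        ∃ H : Path.Homotopy γ (l.foldr Path.trans (Path.refl y₀)),
          ∀ z : I × I, H z ∈ ball y₀ ((k + 1) * r))
    (γ : Path y₀ y₀) (g : C(I, E)) (hg : ∀ t, q (g t) = γ t) : g 1 = g 0 := by
  obtain ⟨P, ⟨H, -⟩, hlifts⟩ := key_lemma hq y₀ k hk htriv γ
  have hqg0 : q (g 0) = y₀ := by rw [hg 0, γ.source]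
  obtain ⟨Γ, hΓ⟩ := hlifts (g 0) hqg0
  -- apply homotopy invariance of endpoints
  have := homotopy_endpoint hq
    ⟨fun p => H p, H.continuous⟩ (g 0)
    (fun s => by
      show H (s, 0) = q (g 0)
      rw [hqg0]
      exact H.source s)
    (fun s s' => by
      show H (s, 1) = H (s', 1)
      rw [H.target s, H.target s'])
    g ⟨Γ, Γ.continuous⟩ rfl Γ.source
    (fun t => by
      show q (g t) = H (0, t)
      rw [hg t]
      exact (H.apply_zero t).symm)
    (fun t => by
      show q (Γ t) = H (1, t)
      rw [hΓ t]
      exact (H.apply_one t).symm)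
  show g 1 = g 0
  rw [this]
  exact Γ.target

end Metric2


section FG

open CategoryTheory

lemma indHom_pathClass {X Y : Type u} [TopologicalSpace X] [TopologicalSpace Y]
    (f : C(X, Y)) {x : X} (γ : Path x x) :
    indHom f x (pathClass γ) = pathClass (γ.map f.continuous) := by
  show (πₘ (show TopCat.of X ⟶ TopCat.of Y from TopCat.ofHom f)).map ⟦γ⟧ = ⟦γ.map f.continuous⟧
  exact (Path.Homotopic.Quotient.mk_map γ f).symm

end FG

theorem stmt10 {Y : Type u} [MetricSpace Y] [CompleteSpace Y] [ProperSpace Y]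
    (hlen : IsLengthSpace Y) (y₀ : Y) (k : ℝ) (hk : 0 < k)
    (htriv : ∀ r, 0 < r → ∀ δ, 0 < δ → DeltaTrivial y₀ r ((k + 1) * r) δ) :
    ∀ (E : Type u) [TopologicalSpace E] [PathConnectedSpace E] (q : E → Y)
      (hq : IsCoveringMap q) (e₀ : E), q e₀ = y₀ →
      Function.Surjective (indHom ⟨q, hq.continuous⟩ e₀) ∧ Function.Bijective q := by
  intro E _ _ q hq e₀ he
  subst he
  haveI hpc : PathConnectedSpace Y := by
    refine ⟨⟨q e₀⟩, fun x y => ?_⟩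
    by_contra h
    haveI : IsEmpty (Path x y) := ⟨fun p => h ⟨p⟩⟩
    have h2 := hlen x y
    rw [iInf_of_empty] at h2
    exact absurd h2 (edist_ne_top x y)
  haveI hne : ∀ x : Y, Nonempty (q ⁻¹' {x}) := by
    haveI : ConnectedSpace Y := PathConnectedSpace.connectedSpace
    have hrange : Set.range q = Set.univ :=
      (IsClopen.eq_univ ⟨cov_range_closed hq, hq.isOpenMap.isOpen_range⟩) ⟨q e₀, Set.mem_range_self e₀⟩
    intro x
    obtain ⟨e, he⟩ : x ∈ Set.range q := by rw [hrange]; trivial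
    exact ⟨⟨e, he⟩⟩
  have htriv' : ∀ r, 0 < r → ∀ δ, 0 < δ → ∀ γ : Path (q e₀) (q e₀),
      (∀ t, γ t ∈ closedBall (q e₀) r) →
      ∃ l : List (Path (q e₀) (q e₀)),
        (∀ γ' ∈ l, ∃ (z c : Y) (α : Path (q e₀) z) (β : Path z z),
          (∀ t, β t ∈ ball c δ) ∧ γ' = (α.trans β).trans α.symm) ∧
        ∃ H : Path.Homotopy γ (l.foldr Path.trans (Path.refl (q e₀))),
          ∀ z : I × I, H z ∈ ball (q e₀) ((k + 1) * r) := by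
    intro r hr δ hδ γ hγ
    obtain ⟨l, hdelta, hhom⟩ := htriv r hr δ hδ γ hγ
    exact ⟨l, hdelta, hhom⟩
  constructor
  · -- surjectivity of the induced homomorphism
    intro g
    obtain ⟨γ, hγ⟩ := Quotient.exists_rep
      (FundamentalGroup.toPath g : Path.Homotopic.Quotient (q e₀) (q e₀))
    obtain ⟨P, ⟨H, -⟩, hlifts⟩ := key_lemma hq (q e₀) k hk htriv' γ
    obtain ⟨Γ, hΓ⟩ := hlifts e₀ rfl
    refine ⟨pathClass Γ, ?_⟩
    rw [indHom_pathClass]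
    show (⟦Γ.map hq.continuous⟧ : Path.Homotopic.Quotient (q e₀) (q e₀)) = FundamentalGroup.toPath g
    have h1 : Γ.map hq.continuous = P := by
      ext t
      exact hΓ t
    rw [h1, ← hγ]
    exact Quotient.sound ⟨H.symm⟩
  · constructor
    · -- injectivity of q
      intro e e' hee
      set qc := hq.continuous with hqc
      obtain τ := PathConnectedSpace.somePath e₀ e
      obtain ψ := PathConnectedSpace.somePath e e'
      set σp : Path (q e₀) (q e) := τ.map qc with hσp
      set ψm : Path (q e) (q e) := (ψ.map qc).cast rfl hee with hψm
      set L : Path (q e₀) (q e₀) := (σp.trans ψm).trans σp.symm with hL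
      have heρ : q e' = σp.symm.toContinuousMap 0 := hee.symm.trans σp.symm.source.symm
      set ρ := clift hq σp.symm.toContinuousMap e' heρ with hρ
      have hρ0 : ρ 0 = e' := by rw [hρ]; exact clift_zero hq _ _ _
      have hρproj : ∀ t, q (ρ t) = σp.symm t := fun t => clift_proj hq _ _ _ t
      set Pρ : Path e' (ρ 1) :=
        { toFun := ρ, continuous_toFun := ρ.continuous,
          source' := hρ0, target' := rfl } with hPρ
      set Cand : Path e₀ (ρ 1) := (τ.trans ψ).trans Pρ with hCand
      have hCandproj : ∀ t, q (Cand t) = L t := by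
        intro t
        rw [hCand, hL]
        refine comp_trans_apply _ _ _ _ ?_ ?_ t
        · exact comp_trans_apply _ _ _ _ (fun u => rfl) (fun u => rfl)
        · exact fun u => hρproj u
      have hmon := monodromy_trivial hq (q e₀) k hk htriv' L
        ⟨Cand, Cand.continuous⟩ hCandproj
      have hρ1 : ρ 1 = e₀ := by
        have h1 : Cand 1 = Cand 0 := hmon
        rw [Cand.target, Cand.source] at h1
        exact h1
      -- ρ reversed is a lift of σp starting at e₀; so is τ
      have huniq : (fun t => ρ (unitInterval.symm t)) = ⇑τ := by
        refine lift_unique hq (ρ.continuous.comp unitInterval.continuous_symm)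
          τ.continuous (fun t => ?_) ?_
        · show q (ρ (unitInterval.symm t)) = q (τ t)
          rw [hρproj]
          show σp.symm (unitInterval.symm t) = q (τ t)
          show σp (unitInterval.symm (unitInterval.symm t)) = q (τ t)
          rw [unitInterval.symm_symm]
          rfl
        · show ρ (unitInterval.symm 0) = τ 0
          rw [unitInterval.symm_zero, τ.source, hρ1]
      have := congrFun huniq 1
      rw [unitInterval.symm_one, hρ0, τ.target] at this
      exact this.symm
    · -- surjectivity of q
      haveI : ConnectedSpace Y := PathConnectedSpace.connectedSpace
      have hopen : IsOpen (Set.range q) := hq.isOpenMap.isOpen_range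
      have hclosed : IsClosed (Set.range q) := by
        rw [← isOpen_compl_iff, isOpen_iff_mem_nhds]
        intro y hy
        refine Filter.mem_of_superset
          ((hq y).toTrivialization.open_baseSet.mem_nhds
            ((hq y).mem_toTrivialization_baseSet)) ?_
        intro y' hy' hyr
        obtain ⟨e1, rfl⟩ := hyr
        have hfib := ((hq y).toTrivialization e1).2
        exact hy ⟨hfib.1, hfib.2⟩
      have hrange : Set.range q = Set.univ :=
        (IsClopen.eq_univ ⟨hclosed, hopen⟩) ⟨q e₀, Set.mem_range_self e₀⟩
      intro y
      have : y ∈ Set.range q := by rw [hrange]; trivial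
      exact this
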